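/- Let m ≥ 1 and i ≥ 2 be integers and p ∈ (0,1). Define the sequence (D_t)_{t≥i} by D_i = m and D_{t+1} = D_t·(1 + (1-p)/(2t) - p·e_t) + p·m·c_t for t ≥ i. Then D_t = O(t^{(1-p)/2}·ln t) as t → ∞; that is, there exist a constant C > 0 and an integer T ≥ i such that D_t ≤ C·t^{(1-p)/2}·ln t for all t ≥ T. -/

import Mathlib

/-- `c_l = (2ml+1)/(l(2ml+1-2m))`. -/
noncomputable def cPAAPA (m l : ℕ) : ℝ :=
  (2 * (m : ℝ) * l + 1) / ((l : ℝ) * (2 * (m : ℝ) * l + 1 - 2 * m))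

/-- `e_l = m/(l(2ml+1-2m))`. -/
noncomputable def ePAAPA (m l : ℕ) : ℝ :=
  (m : ℝ) / ((l : ℝ) * (2 * (m : ℝ) * l + 1 - 2 * m))

/-- Bernoulli-type lower bound: `1 + αx - x² ≤ (1+x)^α` for `0 < α < 1`, `0 < x ≤ 1`. -/
lemma bern_lower {α x : ℝ} (hα0 : 0 < α) (hα1 : α < 1) (hx0 : 0 < x) (hx1 : x ≤ 1) :
    1 + α * x - x ^ 2 ≤ (1 + x) ^ α := by
  have h1x : (0:ℝ) < 1 + x := by linarith
  have hb : (1 + x) ^ (1 - α) ≤ 1 + (1 - α) * x :=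
    rpow_one_add_le_one_add_mul_self (by linarith) (by linarith) (by linarith)
  have hy : (0:ℝ) < (1 + x) ^ α := Real.rpow_pos_of_pos h1x α
  have hmul : (1 + x) ^ α * (1 + x) ^ (1 - α) = 1 + x := by
    rw [← Real.rpow_add h1x]; simp
  have hd : (0:ℝ) < 1 + (1 - α) * x := by nlinarith
  have h2 : (1 + α * x - x ^ 2) * (1 + (1 - α) * x) ≤ (1 + x) ^ α * (1 + (1 - α) * x) := by
    calc (1 + α * x - x ^ 2) * (1 + (1 - α) * x) ≤ 1 + x := by
          nlinarith [mul_nonneg (sq_nonneg x) (sub_nonneg.2 hα1.le), sq_nonneg (α*x),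
            mul_nonneg (mul_nonneg (mul_nonneg hx0.le hx0.le) hx0.le) (sub_nonneg.2 hα1.le)]
      _ = (1 + x) ^ α * (1 + x) ^ (1 - α) := hmul.symm
      _ ≤ (1 + x) ^ α * (1 + (1 - α) * x) := mul_le_mul_of_nonneg_left hb hy.le
  exact le_of_mul_le_mul_right h2 hd

/-- Key growth inequality for the comparison function `r^α · log r`. -/
lemma gkey {α : ℝ} (hα0 : 0 < α) (hα1 : α < 1) {r : ℝ} (hr : 256 ≤ r) :
    r ^ α * Real.log r * (1 + α / r) + r ^ α / r * (1 / 8)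
      ≤ (r + 1) ^ α * Real.log (r + 1) := by
  have hr0 : (0:ℝ) < r := by linarith
  have hL0 : 0 ≤ Real.log r := Real.log_nonneg (by linarith)
  have hL8 : Real.log r ≤ r / 8 := by
    have h1 : Real.log r = 2 * Real.log (Real.sqrt r) := by
      rw [Real.log_sqrt hr0.le]; ring
    have h2 : Real.log (Real.sqrt r) ≤ Real.sqrt r :=
      (Real.log_le_sub_one_of_pos (Real.sqrt_pos.2 hr0)).trans (by linarith)
    have h3 : Real.sqrt r ≤ r / 16 := by
      have h4 := Real.sqrt_le_sqrt (show r ≤ (r/16)^2 by nlinarith)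
      rwa [Real.sqrt_sq (by positivity)] at h4
    linarith
  have hlog : Real.log r + 1 / (2 * r) ≤ Real.log (r + 1) := by
    have h1 : Real.log (r / (r+1)) ≤ r / (r+1) - 1 :=
      Real.log_le_sub_one_of_pos (by positivity)
    rw [Real.log_div hr0.ne' (by linarith)] at h1
    have h2 : r / (r + 1) - 1 = -(1/(r+1)) := by field_simp; ring
    have h3 : 1 / (2*r) ≤ 1 / (r+1) :=
      one_div_le_one_div_of_le (by linarith) (by linarith)
    linarith
  have hrpow : r ^ α * (1 + α / r - 1 / r ^ 2) ≤ (r + 1) ^ α := by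
    have hx := bern_lower hα0 hα1 (show 0 < 1/r by positivity)
      (by rw [div_le_one hr0]; linarith)
    have heq : (r + 1) ^ α = r ^ α * (1 + 1/r) ^ α := by
      rw [← Real.mul_rpow hr0.le (by positivity)]
      congr 1
      field_simp
    rw [heq]
    apply mul_le_mul_of_nonneg_left _ (Real.rpow_nonneg hr0.le α)
    have e : 1 + α * (1/r) - (1/r)^2 = 1 + α / r - 1 / r ^ 2 := by ring
    linarith
  have hA : 0 ≤ r ^ α := Real.rpow_nonneg hr0.le α
  have hinvsq : 1 / r ^ 2 ≤ 1 := by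
    rw [div_le_one (by positivity)]; nlinarith
  have hfac : 0 ≤ 1 + α / r - 1 / r ^ 2 := by
    have h5 : 0 ≤ α / r := by positivity
    linarith
  have hlogpos : 0 ≤ Real.log r + 1 / (2 * r) := by
    have : (0:ℝ) < 1 / (2*r) := by positivity
    linarith
  have hbr : Real.log r * (1 + α / r) + (1/r) * (1/8)
      ≤ (1 + α / r - 1 / r ^ 2) * (Real.log r + 1 / (2 * r)) := by
    have hnum : 0 ≤ 3 * r ^ 2 + 4 * α * r - 8 * r * Real.log r - 4 := by
      nlinarith [mul_le_mul_of_nonneg_left hL8 hr0.le, mul_nonneg hα0.le hr0.le]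
    have hdiff : (1 + α / r - 1 / r ^ 2) * (Real.log r + 1 / (2 * r))
        - (Real.log r * (1 + α / r) + (1/r) * (1/8))
        = (3 * r ^ 2 + 4 * α * r - 8 * r * Real.log r - 4) / (8 * r ^ 3) := by
      field_simp
      ring
    have hpos : 0 ≤ (3 * r ^ 2 + 4 * α * r - 8 * r * Real.log r - 4) / (8 * r ^ 3) :=
      div_nonneg hnum (by positivity)
    linarith
  calc r ^ α * Real.log r * (1 + α / r) + r ^ α / r * (1 / 8)
      = r ^ α * (Real.log r * (1 + α / r) + (1/r) * (1/8)) := by ring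
    _ ≤ r ^ α * ((1 + α / r - 1 / r ^ 2) * (Real.log r + 1 / (2 * r))) :=
        mul_le_mul_of_nonneg_left hbr hA
    _ = (r ^ α * (1 + α / r - 1 / r ^ 2)) * (Real.log r + 1 / (2 * r)) := by ring
    _ ≤ (r + 1) ^ α * Real.log (r + 1) := by
        refine mul_le_mul hrpow hlog hlogpos (Real.rpow_nonneg (by linarith) α)

set_option maxHeartbeats 1000000 in
/-- Theorem 3.8 of the paper: in the mixed PA-APA model with parameter `p ∈ (0,1)`
the expected degree `D_t` of vertex `v_i`, which satisfies the displayed recursion,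
grows at most like `t^{(1-p)/2} ln t`. -/
theorem pa_apa_mixed_expected_degree_growth (m i : ℕ) (hm : 1 ≤ m) (hi : 2 ≤ i)
    (p : ℝ) (hp0 : 0 < p) (hp1 : p < 1) (D : ℕ → ℝ)
    (hstart : D i = (m : ℝ))
    (hrec : ∀ t, i ≤ t →
      D (t + 1) = D t * (1 + (1 - p) / (2 * (t : ℝ)) - p * ePAAPA m t)
        + p * (m : ℝ) * cPAAPA m t) :
    ∃ C : ℝ, 0 < C ∧ ∃ T : ℕ, i ≤ T ∧
      ∀ t, T ≤ t → D t ≤ C * (t : ℝ) ^ ((1 - p) / 2) * Real.log t := by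
  set α := (1 - p) / 2 with hαdef
  have hα0 : 0 < α := by rw [hαdef]; linarith
  have hα1 : α < 1 := by rw [hαdef]; linarith
  have hm' : (1:ℝ) ≤ (m:ℝ) := by exact_mod_cast hm
  set T := max i 256 with hTdef
  have hiT : i ≤ T := le_max_left _ _
  have hT256 : (256:ℕ) ≤ T := le_max_right _ _
  have hTr : (256:ℝ) ≤ (T:ℝ) := by exact_mod_cast hT256
  have hgT : 0 < (T:ℝ) ^ α * Real.log T :=
    mul_pos (Real.rpow_pos_of_pos (by linarith) α) (Real.log_pos (by linarith))
  set B := max (24 * (m:ℝ)) ((|D T| + 1) / ((T:ℝ) ^ α * Real.log T)) with hBdef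
  have hB24 : 24 * (m:ℝ) ≤ B := le_max_left _ _
  have hB0 : 0 < B := lt_of_lt_of_le (by linarith) hB24
  have main : ∀ t, T ≤ t → D t ≤ B * ((t:ℝ) ^ α * Real.log t) := by
    intro t ht
    induction t, ht using Nat.le_induction with
    | base =>
      calc D T ≤ |D T| := le_abs_self _
        _ ≤ (|D T| + 1) / ((T:ℝ) ^ α * Real.log T) * ((T:ℝ) ^ α * Real.log T) := by
            rw [div_mul_cancel₀ _ hgT.ne']
            linarith
        _ ≤ B * ((T:ℝ) ^ α * Real.log T) :=
            mul_le_mul_of_nonneg_right (le_max_right _ _) hgT.le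
    | succ t ht IH =>
      have hit : i ≤ t := le_trans hiT ht
      have hr : (256:ℝ) ≤ (t:ℝ) := by
        have : (256:ℕ) ≤ t := le_trans hT256 ht
        exact_mod_cast this
      have hr0 : (0:ℝ) < (t:ℝ) := by linarith
      have hDd : (0:ℝ) < (t:ℝ) * (2 * (m:ℝ) * t + 1 - 2 * m) := by
        have hq : (0:ℝ) < 2 * (m:ℝ) * ((t:ℝ) - 1) + 1 := by
          nlinarith [mul_nonneg (by linarith : (0:ℝ) ≤ (m:ℝ)) (by linarith : (0:ℝ) ≤ (t:ℝ) - 1)]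
        nlinarith [mul_pos hr0 hq]
      have he0 : 0 ≤ ePAAPA m t := by
        rw [ePAAPA]
        exact div_nonneg (by positivity) hDd.le
      have he1 : ePAAPA m t ≤ 1 := by
        rw [ePAAPA, div_le_one hDd]
        have h1 : (1:ℝ) ≤ 2 * (t:ℝ) * ((t:ℝ) - 1) := by nlinarith
        have h2 : (m:ℝ) * 1 ≤ (m:ℝ) * (2 * (t:ℝ) * ((t:ℝ) - 1)) :=
          mul_le_mul_of_nonneg_left h1 (by linarith)
        nlinarith
      have hpe : p * ePAAPA m t ≤ 1 := by nlinarith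
      have hF0 : 0 ≤ 1 + (1 - p) / (2 * (t:ℝ)) - p * ePAAPA m t := by
        have h5 : 0 ≤ (1 - p) / (2 * (t:ℝ)) := div_nonneg (by linarith) (by positivity)
        linarith
      have hFle : 1 + (1 - p) / (2 * (t:ℝ)) - p * ePAAPA m t ≤ 1 + α / (t:ℝ) := by
        have h5 : 0 ≤ p * ePAAPA m t := mul_nonneg hp0.le he0
        have h6 : (1 - p) / (2 * (t:ℝ)) = α / (t:ℝ) := by rw [hαdef]; ring
        linarith
      have hc0 : 0 ≤ cPAAPA m t := by
        rw [cPAAPA]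
        exact div_nonneg (by positivity) hDd.le
      have hforce : p * (m:ℝ) * cPAAPA m t ≤ 3 * (m:ℝ) / (t:ℝ) := by
        have h7 : p * ((m:ℝ) * cPAAPA m t) ≤ 1 * ((m:ℝ) * cPAAPA m t) :=
          mul_le_mul_of_nonneg_right hp1.le (mul_nonneg (by positivity) hc0)
        have h8 : (m:ℝ) * cPAAPA m t ≤ 3 * (m:ℝ) / (t:ℝ) := by
          rw [cPAAPA, mul_div_assoc']
          rw [div_le_div_iff₀ hDd hr0]
          have hmt : (0:ℝ) ≤ (m:ℝ) := by linarith
          have hfac : (0:ℝ) ≤ 4 * (m:ℝ) * (t:ℝ) + 2 - 6 * (m:ℝ) := by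
            nlinarith [mul_le_mul_of_nonneg_left hr hmt]
          nlinarith [mul_nonneg (mul_nonneg hmt hr0.le) hfac]
        calc p * (m:ℝ) * cPAAPA m t = p * ((m:ℝ) * cPAAPA m t) := by ring
          _ ≤ 1 * ((m:ℝ) * cPAAPA m t) := h7
          _ = (m:ℝ) * cPAAPA m t := by ring
          _ ≤ 3 * (m:ℝ) / (t:ℝ) := h8
      have hg0 : 0 ≤ (t:ℝ) ^ α * Real.log t :=
        mul_nonneg (Real.rpow_nonneg hr0.le α) (Real.log_nonneg (by linarith))
      have h1pow : (1:ℝ) ≤ (t:ℝ) ^ α := by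
        calc (1:ℝ) = (1:ℝ) ^ α := (Real.one_rpow α).symm
          _ ≤ (t:ℝ) ^ α := Real.rpow_le_rpow (by norm_num) (by linarith) hα0.le
      have hB3 : 3 * (m:ℝ) / (t:ℝ) ≤ B * ((t:ℝ) ^ α / (t:ℝ)) * (1/8) := by
        have h9 : 24 * (m:ℝ) ≤ B * (t:ℝ) ^ α := by nlinarith
        rw [div_le_iff₀ hr0]
        calc 3 * (m:ℝ) = 24 * (m:ℝ) * (1/8) := by ring
          _ ≤ B * (t:ℝ) ^ α * (1/8) := by linarith
          _ = B * ((t:ℝ) ^ α / (t:ℝ)) * (1/8) * (t:ℝ) := by field_simp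
      have hkey := gkey hα0 hα1 hr
      rw [hrec t hit]
      calc D t * (1 + (1 - p) / (2 * (t:ℝ)) - p * ePAAPA m t) + p * (m:ℝ) * cPAAPA m t
          ≤ B * ((t:ℝ) ^ α * Real.log t) * (1 + (1 - p) / (2 * (t:ℝ)) - p * ePAAPA m t)
            + p * (m:ℝ) * cPAAPA m t :=
            add_le_add (mul_le_mul_of_nonneg_right IH hF0) le_rfl
        _ ≤ B * ((t:ℝ) ^ α * Real.log t) * (1 + α / (t:ℝ)) + 3 * (m:ℝ) / (t:ℝ) :=
            add_le_add (mul_le_mul_of_nonneg_left hFle (mul_nonneg hB0.le hg0)) hforce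
        _ ≤ B * ((t:ℝ) ^ α * Real.log t) * (1 + α / (t:ℝ))
            + B * ((t:ℝ) ^ α / (t:ℝ)) * (1/8) := add_le_add le_rfl hB3
        _ = B * ((t:ℝ) ^ α * Real.log t * (1 + α / (t:ℝ)) + (t:ℝ) ^ α / (t:ℝ) * (1/8)) := by
            ring
        _ ≤ B * (((t:ℝ) + 1) ^ α * Real.log ((t:ℝ) + 1)) :=
            mul_le_mul_of_nonneg_left hkey hB0.le
        _ = B * (((t+1 : ℕ):ℝ) ^ α * Real.log ((t+1 : ℕ):ℝ)) := by push_cast; ring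
  refine ⟨B, hB0, T, hiT, fun t ht => ?_⟩
  calc D t ≤ B * ((t:ℝ) ^ α * Real.log t) := main t ht
    _ = B * (t:ℝ) ^ α * Real.log t := by ring
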